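/- Fix constants γ, β, μ > 0 and for k ∈ ℝ³ let λ_±(k) = −μ|k|²/2 ± (1/2)√(μ²|k|⁴ − 4(γ²|k|² + β²)) (complex square root) be the roots of z² + μ|k|²z + (γ²|k|² + β²) = 0. Then there exist constants ε > 0 and C > 0 such that for every k with 0 < |k| ≤ ε (in which case μ²|k|⁴ − 4(γ²|k|² + β²) < 0, so λ₊ ≠ λ₋) and every t ≥ 0: |(λ₊(k) e^{λ₋(k)t} − λ₋(k) e^{λ₊(k)t})/(λ₊(k) − λ₋(k))| ≤ C e^{−μ|k|²t/2}. -/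

import Mathlib

/-- The principal complex square root of a real number. -/
noncomputable def sqrtC (x : ℝ) : ℂ := (x : ℂ) ^ (1/2 : ℂ)

lemma sqrtC_neg {x : ℝ} (hx : x < 0) : sqrtC x = Real.sqrt (-x) * Complex.I := by
  have hx0 : (x:ℂ) ≠ 0 := by exact_mod_cast hx.ne
  rw [sqrtC, Complex.cpow_def_of_ne_zero hx0]
  have hlog : Complex.log (x:ℂ) = (Real.log (-x) : ℂ) + Real.pi * Complex.I := by
    rw [Complex.log, Complex.arg_ofReal_of_neg hx]
    simp [abs_of_neg hx]
  rw [hlog]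
  rw [show ((Real.log (-x) : ℂ) + Real.pi * Complex.I) * (1/2)
      = ((Real.log (-x) / 2 : ℝ) : ℂ) + ((Real.pi/2 : ℝ):ℂ) * Complex.I by push_cast; ring]
  rw [Complex.exp_add, Complex.exp_mul_I]
  have h1 : Complex.exp ((Real.log (-x)/2 : ℝ):ℂ) = (Real.sqrt (-x) : ℂ) := by
    rw [← Complex.ofReal_exp]
    norm_cast
    rw [Real.sqrt_eq_rpow, Real.rpow_def_of_pos (by linarith), mul_one_div]
  rw [h1]
  norm_cast
  simp [Real.cos_pi_div_two, Real.sin_pi_div_two]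

set_option maxHeartbeats 1000000 in
/-- there are `ε, C > 0` such that for all `0 < |k| ≤ ε` (in which
case the discriminant `μ²|k|⁴ − 4(γ²|k|² + β²)` is negative, so `λ₊ ≠ λ₋`) and
all `t ≥ 0`,
`|(λ₊e^{λ₋t} − λ₋e^{λ₊t})/(λ₊ − λ₋)| ≤ C e^{−μ|k|²t/2}`. -/
theorem stmt18 (γ β μ : ℝ) (hγ : 0 < γ) (hβ : 0 < β) (hμ : 0 < μ) :
    ∃ ε : ℝ, 0 < ε ∧ ∃ C : ℝ, 0 < C ∧
      ∀ k : EuclideanSpace ℝ (Fin 3), 0 < ‖k‖ → ‖k‖ ≤ ε →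
        μ^2*‖k‖^4 - 4*(γ^2*‖k‖^2 + β^2) < 0 ∧
        ∀ lp lm : ℂ,
          lp = (-(((μ*‖k‖^2 : ℝ):ℂ)) + sqrtC (μ^2*‖k‖^4 - 4*(γ^2*‖k‖^2 + β^2)))/2 →
          lm = (-(((μ*‖k‖^2 : ℝ):ℂ)) - sqrtC (μ^2*‖k‖^4 - 4*(γ^2*‖k‖^2 + β^2)))/2 →
          lp ≠ lm ∧
          ∀ t : ℝ, 0 ≤ t →
            ‖((lp * Complex.exp (lm*(t:ℂ)) - lm * Complex.exp (lp*(t:ℂ)))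
                / (lp - lm))‖
              ≤ C * Real.exp (-(μ*‖k‖^2*t/2)) := by
  set m : ℝ := Real.sqrt (γ^2*(β/μ) + β^2) with hm
  have hmpos : 0 < m := Real.sqrt_pos.mpr (by positivity)
  have hmβ : β ≤ m := by
    rw [hm, show γ^2*(β/μ) + β^2 = β^2 + γ^2*(β/μ) by ring]
    calc β = Real.sqrt (β^2) := by rw [Real.sqrt_sq hβ.le]
    _ ≤ _ := Real.sqrt_le_sqrt (le_add_of_nonneg_right (by positivity))
  refine ⟨Real.sqrt (β/μ), Real.sqrt_pos.mpr (by positivity), (β + 2*m)/β, div_pos (by linarith) hβ, ?_⟩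
  intro k hk hkε
  set s : ℝ := ‖k‖ with hs
  have hs2 : s^2 ≤ β/μ := by
    calc s^2 ≤ (Real.sqrt (β/μ))^2 := by
          apply pow_le_pow_left₀ hk.le hkε 2
    _ = β/μ := Real.sq_sqrt (by positivity)
  have ha : μ * s^2 ≤ β := by
    have := mul_le_mul_of_nonneg_left hs2 hμ.le
    rwa [mul_div_cancel₀ β hμ.ne'] at this
  set a : ℝ := μ * s^2 with haa
  have ha0 : 0 < a := by positivity
  set D : ℝ := μ^2*s^4 - 4*(γ^2*s^2 + β^2) with hD
  have hDneg : D < 0 := by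
    have h4 : μ^2*s^4 = a^2 := by rw [haa]; ring
    nlinarith [sq_nonneg s, hγ.le, mul_pos hγ hγ]
  refine ⟨hDneg, ?_⟩
  set d : ℝ := Real.sqrt (-D) with hd
  have hd0 : 0 < d := Real.sqrt_pos.mpr (by linarith)
  have hd2 : d^2 = -D := Real.sq_sqrt (by linarith)
  have hdβ : β ≤ d := by
    rw [hd]
    rw [show (β : ℝ) = Real.sqrt (β^2) by rw [Real.sqrt_sq hβ.le]]
    apply Real.sqrt_le_sqrt
    nlinarith
  have hdm : d ≤ 2*m := by
    rw [hd, hm]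
    rw [show (2:ℝ)*Real.sqrt (γ^2*(β/μ) + β^2) = Real.sqrt (4*(γ^2*(β/μ) + β^2)) by
      rw [show (4:ℝ)*(γ^2*(β/μ) + β^2) = 2^2 * (γ^2*(β/μ) + β^2) by ring,
        Real.sqrt_mul (by norm_num), Real.sqrt_sq (by norm_num)]]
    apply Real.sqrt_le_sqrt
    have := mul_le_mul_of_nonneg_left hs2 (by positivity : (0:ℝ) ≤ 4*γ^2)
    nlinarith [sq_nonneg (μ*s^2)]
  intro lp lm hlp hlm
  have hsq : sqrtC (μ^2*s^4 - 4*(γ^2*s^2 + β^2)) = (d:ℂ) * Complex.I := by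
    rw [show μ^2*s^4 - 4*(γ^2*s^2 + β^2) = D from rfl, sqrtC_neg hDneg, hd]
  have hlp' : lp = ((-(a/2) : ℝ) : ℂ) + ((d/2 : ℝ):ℂ) * Complex.I := by
    rw [hlp, hsq, haa]; push_cast; ring
  have hlm' : lm = ((-(a/2) : ℝ) : ℂ) - ((d/2 : ℝ):ℂ) * Complex.I := by
    rw [hlm, hsq, haa]; push_cast; ring
  have hdiff : lp - lm = (d:ℂ) * Complex.I := by
    rw [hlp', hlm']; push_cast; ring
  have hne : lp ≠ lm := by
    intro h
    have : lp - lm = 0 := by rw [h]; ring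
    rw [hdiff] at this
    simp [Complex.I_ne_zero, Complex.ext_iff] at this
    exact hd0.ne' this
  refine ⟨hne, ?_⟩
  intro t ht
  have habsd : ‖lp - lm‖ = d := by
    rw [hdiff]
    simp [abs_of_pos hd0]
  have hlpre : lp.re = -(a/2) := by rw [hlp']; simp
  have hlmre : lm.re = -(a/2) := by rw [hlm']; simp
  have habslp : ‖lp‖ ≤ (a + d)/2 := by
    rw [hlp']
    calc ‖_‖ ≤ ‖((-(a/2):ℝ):ℂ)‖ + ‖((d/2:ℝ):ℂ) * Complex.I‖ :=
          norm_add_le _ _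
    _ = (a + d)/2 := by
          rw [norm_mul, Complex.norm_I, Complex.norm_real, Complex.norm_real, Real.norm_eq_abs, Real.norm_eq_abs,
            abs_of_nonpos (by linarith : -(a/2) ≤ (0:ℝ)), abs_of_pos (by linarith : (0:ℝ) < d/2)]
          ring
  have habslm : ‖lm‖ ≤ (a + d)/2 := by
    rw [hlm', sub_eq_add_neg]
    calc ‖_‖ ≤ ‖((-(a/2):ℝ):ℂ)‖ + ‖-(((d/2:ℝ):ℂ) * Complex.I)‖ :=
          norm_add_le _ _
    _ = (a + d)/2 := by
          rw [norm_neg, norm_mul, Complex.norm_I, Complex.norm_real,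
            Complex.norm_real, Real.norm_eq_abs, Real.norm_eq_abs, abs_of_nonpos (by linarith : -(a/2) ≤ (0:ℝ)),
            abs_of_pos (by linarith : (0:ℝ) < d/2)]
          ring
  set E : ℝ := Real.exp (-(a*t/2)) with hE
  have hE0 : 0 < E := Real.exp_pos _
  have hexp : ∀ z : ℂ, z.re = -(a/2) → ‖Complex.exp (z*(t:ℂ))‖ = E := by
    intro z hz
    rw [Complex.norm_exp]
    congr 1
    simp [Complex.mul_re, hz]
    ring
  have hnum : ‖lp * Complex.exp (lm*(t:ℂ)) - lm * Complex.exp (lp*(t:ℂ))‖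
      ≤ (a + d) * E := by
    calc ‖lp * Complex.exp (lm*(t:ℂ)) - lm * Complex.exp (lp*(t:ℂ))‖
        ≤ ‖lp * Complex.exp (lm*(t:ℂ))‖ + ‖lm * Complex.exp (lp*(t:ℂ))‖ :=
          norm_sub_le _ _
    _ = ‖lp‖ * E + ‖lm‖ * E := by
          rw [norm_mul, norm_mul, hexp _ hlmre, hexp _ hlpre]
    _ ≤ (a+d)/2 * E + (a+d)/2 * E := by
          gcongr
    _ = (a + d) * E := by ring
  rw [norm_div, habsd]
  rw [div_le_iff₀ hd0]
  calc ‖lp * Complex.exp (lm*(t:ℂ)) - lm * Complex.exp (lp*(t:ℂ))‖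
      ≤ (a + d) * E := hnum
  _ ≤ (β + 2*m)/β * E * d := by
      have key : (a+d)*β ≤ (β+2*m)*d := by
        have h1 : a*β ≤ β*d := mul_le_mul ha hdβ hβ.le hβ.le
        have h2 : d*β ≤ d*(2*m) := mul_le_mul_of_nonneg_left (by linarith) hd0.le
        nlinarith
      rw [div_mul_eq_mul_div, div_mul_eq_mul_div, le_div_iff₀ hβ]
      nlinarith [mul_le_mul_of_nonneg_right key hE0.le]
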